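/- If f : ℝ³ → ℝ is a Schwartz function with ℒf = 0 identically, then f(v) = a^f · √(M(v)) for all v; that is, the null space of the linearized Fokker–Planck operator ℒ is the one-dimensional span of √M. -/

import Mathlib

open MeasureTheory Real

noncomputable section

abbrev E3 := EuclideanSpace ℝ (Fin 3)

/-- The normalized global Maxwellian `M(v) = (2π)^{-3/2} exp(-|v|²/2)`. -/
def Mw (v : E3) : ℝ := (2 * π) ^ (-(3:ℝ)/2) * Real.exp (-‖v‖ ^ 2 / 2)

/-- `√M`. -/
def sqrtM (v : E3) : ℝ := Real.sqrt (Mw v)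

/-- Partial derivative in the `i`-th coordinate direction. -/
def pd (i : Fin 3) (f : E3 → ℝ) : E3 → ℝ :=
  fun v => fderiv ℝ f v (EuclideanSpace.single i 1)

/-- The linearized Fokker–Planck operator
`ℒf = M^{-1/2} div_v ( M ∇_v (f M^{-1/2}) )`. -/
def Lop (f : E3 → ℝ) : E3 → ℝ := fun v =>
  (sqrtM v)⁻¹ * ∑ i, pd i (fun w => Mw w * pd i (fun u => f u / sqrtM u) w) v

/-- `a^f = ∫ √M f`. -/
def aF (f : E3 → ℝ) : ℝ := ∫ v, sqrtM v * f v

/-- `b^f = ∫ v √M f` (componentwise). -/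
def bF (f : E3 → ℝ) (i : Fin 3) : ℝ := ∫ v, v i * sqrtM v * f v

/-- `ω^f = ∫ ((|v|²-3)/√6) √M f`. -/
def wF (f : E3 → ℝ) : ℝ := ∫ v, ((‖v‖ ^ 2 - 3) / Real.sqrt 6) * sqrtM v * f v

/-- The macroscopic projection `Pf = (a^f + b^f · v + ω^f (|v|²-3)/√6) √M`. -/
def Pmac (f : E3 → ℝ) : E3 → ℝ := fun v =>
  (aF f + (∑ i, bF f i * v i) + wF f * ((‖v‖ ^ 2 - 3) / Real.sqrt 6)) * sqrtM v

/-- The squared weighted norm `|g|_ν² = ∫ (|∇_v g|² + (1+|v|²) g²)`. -/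
def nuSq (g : E3 → ℝ) : ℝ :=
  ∫ v, ((∑ i, (pd i g v) ^ 2) + (1 + ‖v‖ ^ 2) * (g v) ^ 2)

namespace FPaux

lemma two_pi_pos : (0:ℝ) < 2 * π := by positivity

lemma mw_pos (v : E3) : 0 < Mw v := by
  unfold Mw
  positivity

lemma sqrtM_eq (v : E3) : sqrtM v = (2 * π) ^ (-(3:ℝ)/4) * Real.exp (-‖v‖ ^ 2 / 4) := by
  unfold sqrtM Mw
  rw [Real.sqrt_mul (by positivity)]
  congr 1
  · rw [Real.sqrt_eq_rpow, ← Real.rpow_mul two_pi_pos.le]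
    norm_num
  · rw [← Real.exp_half]
    ring_nf

lemma sqrtM_pos (v : E3) : 0 < sqrtM v := Real.sqrt_pos.mpr (mw_pos v)

lemma sqrtM_sq (v : E3) : sqrtM v ^ 2 = Mw v := Real.sq_sqrt (mw_pos v).le

lemma sqrtM_eq' : sqrtM = fun w : E3 => (2 * π) ^ (-(3:ℝ)/4) * Real.exp ((-(1:ℝ)/4) * ‖w‖ ^ 2) := by
  funext w
  rw [sqrtM_eq]
  ring_nf

lemma hasFDerivAt_sqrtM (v : E3) :
    HasFDerivAt sqrtM ((-(sqrtM v) / 2) • (innerSL ℝ v)) v := by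
  have h1 : HasFDerivAt (fun w : E3 => ‖w‖ ^ 2) (2 • (innerSL ℝ v)) v := by
    simpa using (hasFDerivAt_id v).norm_sq
  have h2 := h1.const_mul ((-(1:ℝ))/4)
  have h3 : HasFDerivAt (fun w : E3 => Real.exp ((-(1:ℝ)/4) * ‖w‖ ^ 2))
      (Real.exp ((-(1:ℝ)/4) * ‖v‖ ^ 2) • ((-(1:ℝ)/4) • (2 • (innerSL ℝ v)))) v :=
    (Real.hasDerivAt_exp _).comp_hasFDerivAt v h2
  have h4 := h3.const_mul ((2 * π) ^ (-(3:ℝ)/4))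
  rw [sqrtM_eq']
  refine h4.congr_fderiv ?_
  ext u
  have : sqrtM v = (2 * π) ^ (-(3:ℝ)/4) * Real.exp ((-(1:ℝ)/4) * ‖v‖ ^ 2) := by
    rw [sqrtM_eq']
  simp [this]
  ring

lemma contDiff_sqrtM : ContDiff ℝ ((⊤:ℕ∞)) sqrtM := by
  rw [sqrtM_eq']
  exact contDiff_const.mul (Real.contDiff_exp.comp (contDiff_const.mul (contDiff_norm_sq ℝ)))

lemma contDiff_Mw : ContDiff ℝ ((⊤:ℕ∞)) Mw := by
  have : Mw = fun w : E3 => (2 * π) ^ (-(3:ℝ)/2) * Real.exp ((-(1:ℝ)/2) * ‖w‖ ^ 2) := by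
    funext w; unfold Mw; ring_nf
  rw [this]
  exact contDiff_const.mul (Real.contDiff_exp.comp (contDiff_const.mul (contDiff_norm_sq ℝ)))

lemma inner_single (v : E3) (i : Fin 3) : (innerSL ℝ v) (EuclideanSpace.single i 1) = v i := by
  simp [EuclideanSpace.inner_single_right]

end FPaux

namespace FPaux

def gg (f : E3 → ℝ) : E3 → ℝ := fun u => f u / sqrtM u

def FF (f : E3 → ℝ) (i : Fin 3) : E3 → ℝ := fun w => Mw w * pd i (gg f) w

lemma Lop_eq (f : E3 → ℝ) (v : E3) :
    Lop f v = (sqrtM v)⁻¹ * ∑ i, pd i (FF f i) v := rfl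

variable (f : SchwartzMap E3 ℝ)

lemma contDiff_g : ContDiff ℝ ((⊤:ℕ∞)) (gg ⇑f) :=
  f.smooth'.div contDiff_sqrtM (fun v => (sqrtM_pos v).ne')

lemma hasFDerivAt_g (v : E3) : HasFDerivAt (gg ⇑f)
    ((sqrtM v)⁻¹ • fderiv ℝ ⇑f v + (f v / (2 * sqrtM v)) • (innerSL ℝ v)) v := by
  have hs := (sqrtM_pos v).ne'
  have hinv : HasFDerivAt (fun w => (sqrtM w)⁻¹)
      ((-(sqrtM v ^ 2)⁻¹) • ((-(sqrtM v) / 2) • (innerSL ℝ v))) v :=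
    (hasDerivAt_inv hs).comp_hasFDerivAt v (hasFDerivAt_sqrtM v)
  have hmul := ((f.differentiable v).hasFDerivAt).mul hinv
  have he : gg ⇑f = fun u => f u * (sqrtM u)⁻¹ :=
    funext fun u => div_eq_mul_inv _ _
  rw [he]
  refine hmul.congr_fderiv ?_
  ext u
  simp
  field_simp
  ring

lemma pd_g (i : Fin 3) (v : E3) :
    pd i (gg ⇑f) v = pd i ⇑f v / sqrtM v + f v * v i / (2 * sqrtM v) := by
  have hs := (sqrtM_pos v).ne'
  show fderiv ℝ (gg ⇑f) v (EuclideanSpace.single i 1) = _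
  rw [(hasFDerivAt_g f v).fderiv]
  simp only [ContinuousLinearMap.add_apply, ContinuousLinearMap.coe_smul', Pi.smul_apply,
    inner_single, smul_eq_mul]
  unfold pd
  field_simp
lemma contDiff_pdg (i : Fin 3) : ContDiff ℝ ((⊤:ℕ∞)) (pd i (gg ⇑f)) := by
  unfold pd
  exact ((contDiff_g f).fderiv_right (by simp)).clm_apply contDiff_const

lemma contDiff_F (i : Fin 3) : ContDiff ℝ ((⊤:ℕ∞)) (FF ⇑f i) :=
  contDiff_Mw.mul (contDiff_pdg f i)

lemma F_eq (i : Fin 3) (v : E3) :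
    FF ⇑f i v = sqrtM v * pd i ⇑f v + v i * (sqrtM v * f v) / 2 := by
  unfold FF
  rw [pd_g]
  have hs := (sqrtM_pos v).ne'
  rw [← sqrtM_sq v]
  field_simp

lemma g_mul_F (i : Fin 3) (v : E3) :
    gg ⇑f v * FF ⇑f i v = f v * pd i ⇑f v + v i * f v ^ 2 / 2 := by
  rw [F_eq]
  unfold gg
  have hs := (sqrtM_pos v).ne'
  field_simp

end FPaux

namespace FPaux

variable (f : SchwartzMap E3 ℝ)

/-- The auxiliary Schwartz-type function `u_i = f ∂_i f + v_i f²/2 = g F_i`. -/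
def uu (f : SchwartzMap E3 ℝ) (i : Fin 3) : E3 → ℝ :=
  fun w => f w * pd i ⇑f w + w i * (f w * f w) / 2

lemma uu_eq (i : Fin 3) : uu f i = fun w => gg ⇑f w * FF ⇑f i w := by
  funext w
  rw [g_mul_F]
  unfold uu
  ring

lemma ne_top : ((1:ℕ∞) : WithTop ℕ∞) ≤ ((⊤:ℕ∞) : WithTop ℕ∞) := by
  exact_mod_cast le_top

lemma diff_g : Differentiable ℝ (gg ⇑f) := (contDiff_g f).differentiable (by simp)

lemma diff_F (i : Fin 3) : Differentiable ℝ (FF ⇑f i) := (contDiff_F f i).differentiable (by simp)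

lemma pd_uu (i : Fin 3) (v : E3) :
    pd i (uu f i) v = pd i (gg ⇑f) v * FF ⇑f i v + gg ⇑f v * pd i (FF ⇑f i) v := by
  rw [uu_eq]
  unfold pd
  rw [fderiv_fun_mul (diff_g f v) (diff_F f i v)]
  simp only [ContinuousLinearMap.add_apply, ContinuousLinearMap.coe_smul', Pi.smul_apply,
    smul_eq_mul]
  ring

lemma sum_pd_uu (h : ∀ v, Lop ⇑f v = 0) (v : E3) :
    ∑ i, pd i (uu f i) v = ∑ i, (sqrtM v * pd i (gg ⇑f) v) ^ 2 := by
  have h0 : ∑ i, pd i (FF ⇑f i) v = 0 := by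
    have hv := h v
    rw [Lop_eq] at hv
    rcases mul_eq_zero.mp hv with h' | h'
    · exact absurd h' (inv_ne_zero (sqrtM_pos v).ne')
    · exact h'
  calc ∑ i, pd i (uu f i) v
      = ∑ i, (pd i (gg ⇑f) v * FF ⇑f i v) + gg ⇑f v * ∑ i, pd i (FF ⇑f i) v := by
        rw [Finset.mul_sum, ← Finset.sum_add_distrib]
        exact Finset.sum_congr rfl fun i _ => pd_uu f i v
    _ = ∑ i, (sqrtM v * pd i (gg ⇑f) v) ^ 2 := by
        rw [h0, mul_zero, add_zero]
        refine Finset.sum_congr rfl fun i _ => ?_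
        show pd i (gg ⇑f) v * (Mw v * pd i (gg ⇑f) v) = _
        rw [← sqrtM_sq v]
        ring

end FPaux

namespace FPaux

lemma integral_fderiv_zero {u : E3 → ℝ} (h1 : Integrable u volume) (h2 : Differentiable ℝ u)
    (h3 : Integrable (fderiv ℝ u) volume) (i : Fin 3) : ∫ v, pd i u v = 0 := by
  set uc : E3 → ℂ := fun v => (u v : ℂ) with huc
  have hdc : ∀ v, HasFDerivAt uc (Complex.ofRealCLM.comp (fderiv ℝ u v)) v :=
    fun v => (Complex.ofRealCLM.hasFDerivAt).comp v (h2 v).hasFDerivAt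
  have hfd : fderiv ℝ uc = fun v => Complex.ofRealCLM.comp (fderiv ℝ u v) :=
    funext fun v => (hdc v).fderiv
  have hc1 : Integrable uc := h1.ofReal
  have hc2 : Differentiable ℝ uc := fun v => (hdc v).differentiableAt
  have hc3 : Integrable (fderiv ℝ uc) := by
    rw [hfd]
    exact (ContinuousLinearMap.compL ℝ E3 ℝ ℂ Complex.ofRealCLM).integrable_comp h3
  have key := congrFun (Real.fourier_fderiv hc1 hc2 hc3) 0
  have lhs : FourierTransform.fourier (fderiv ℝ uc) 0 = ∫ v, fderiv ℝ uc v := by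
    rw [Real.fourier_eq]
    simp
  have rhs : VectorFourier.fourierSMulRight (-innerSL ℝ) (FourierTransform.fourier uc) 0 = 0 := by
    ext w
    simp [VectorFourier.fourierSMulRight]
  rw [lhs, rhs] at key
  have key2 : ∫ v, fderiv ℝ uc v (EuclideanSpace.single i 1) = 0 := by
    rw [← ContinuousLinearMap.integral_apply hc3, key]
    rfl
  have : ∀ v, fderiv ℝ uc v (EuclideanSpace.single i 1) = ((pd i u v : ℝ) : ℂ) := by
    intro v
    rw [hfd]
    rfl
  rw [integral_congr_ae (Filter.Eventually.of_forall this)] at key2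
  have key3 : ((∫ v, pd i u v : ℝ) : ℂ) = 0 := by
    rw [← key2]
    exact (integral_ofReal (𝕜 := ℂ)).symm
  exact_mod_cast key3

end FPaux

namespace FPaux

variable (f : SchwartzMap E3 ℝ)

lemma smul_int {c : E3 → ℝ} {A : E3 → E3 →L[ℝ] ℝ} (hc : Continuous c)
    (hbd : ∃ C, ∀ v, ‖c v‖ ≤ C) (hA : Integrable A volume)
    (hAm : Continuous A) : Integrable (fun v => c v • A v) volume := by
  rcases hbd with ⟨C, hC⟩
  refine (hA.norm.const_mul C).mono' ((hc.smul hAm).aestronglyMeasurable) ?_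
  refine Filter.Eventually.of_forall fun v => ?_
  calc ‖c v • A v‖ ≤ ‖c v‖ * ‖A v‖ := norm_smul_le (c v) (A v)
    _ ≤ C * ‖A v‖ := mul_le_mul_of_nonneg_right (hC v) (norm_nonneg _)

/-- `∂_i f` as a Schwartz map. -/
def Pf (i : Fin 3) : SchwartzMap E3 ℝ :=
  LineDeriv.lineDerivOp (EuclideanSpace.single i 1 : E3) f

lemma Pf_eq (i : Fin 3) : ⇑(Pf f i) = pd i ⇑f :=
  funext fun v => SchwartzMap.lineDerivOp_apply_eq_fderiv _ f v

lemma abs_coord_le (i : Fin 3) (v : E3) : |v i| ≤ ‖v‖ := by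
  rw [EuclideanSpace.norm_eq]
  have h : |v i| ^ 2 ≤ ∑ j, ‖v j‖ ^ 2 := by
    have := Finset.single_le_sum (f := fun j => ‖v j‖ ^ 2)
      (fun j _ => sq_nonneg _) (Finset.mem_univ i)
    simpa [sq_abs] using this
  calc |v i| = Real.sqrt (|v i| ^ 2) := (Real.sqrt_sq (abs_nonneg _)).symm
    _ ≤ _ := Real.sqrt_le_sqrt h

lemma bdd_coord_f (i : Fin 3) : ∃ C, ∀ v : E3, ‖v i * f v‖ ≤ C := by
  refine ⟨SchwartzMap.seminorm ℝ 1 0 f, fun v => ?_⟩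
  have h1 : ‖v‖ ^ 1 * ‖f v‖ ≤ SchwartzMap.seminorm ℝ 1 0 f :=
    SchwartzMap.norm_pow_mul_le_seminorm ℝ f 1 v
  rw [pow_one] at h1
  have h2 : ‖v i * f v‖ ≤ ‖v‖ * ‖f v‖ := by
    rw [norm_mul]
    exact mul_le_mul_of_nonneg_right (abs_coord_le i v) (norm_nonneg _)
  exact h2.trans h1

lemma bdd_f : ∃ C, ∀ v : E3, ‖f v‖ ≤ C :=
  ⟨SchwartzMap.seminorm ℝ 0 0 f, fun v => SchwartzMap.norm_le_seminorm ℝ f v⟩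

lemma cont_coord (i : Fin 3) : Continuous (fun v : E3 => v i) :=
  (EuclideanSpace.proj (𝕜 := ℝ) i).continuous

lemma int_uu (i : Fin 3) : Integrable (uu f i) volume := by
  have t1 : Integrable (fun w : E3 => f w * Pf f i w) volume :=
    ((Pf f i).integrable).bdd_mul f.continuous.aestronglyMeasurable (Filter.Eventually.of_forall (bdd_f f).choose_spec)
  have t2 : Integrable (fun w : E3 => (w i * f w) * f w / 2) volume := by
    refine Integrable.div_const ?_ 2
    exact (f.integrable).bdd_mul ((cont_coord i).mul f.continuous).aestronglyMeasurable
      (Filter.Eventually.of_forall (bdd_coord_f f i).choose_spec)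
  have := t1.add t2
  refine this.congr (Filter.Eventually.of_forall fun w => ?_)
  simp only [Pi.add_apply]
  unfold uu
  rw [Pf_eq]
  ring

end FPaux

namespace FPaux

variable (f : SchwartzMap E3 ℝ)

lemma fderiv_schwartz_eq (g : SchwartzMap E3 ℝ) :
    ⇑(SchwartzMap.fderivCLM ℝ E3 ℝ g) = fderiv ℝ ⇑g :=
  funext fun x => SchwartzMap.fderivCLM_apply ℝ g x

lemma int_fderiv_schwartz (g : SchwartzMap E3 ℝ) : Integrable (fderiv ℝ ⇑g) volume := by
  rw [← fderiv_schwartz_eq]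
  exact (SchwartzMap.fderivCLM ℝ E3 ℝ g).integrable

lemma cont_fderiv_schwartz (g : SchwartzMap E3 ℝ) : Continuous (fderiv ℝ ⇑g) := by
  rw [← fderiv_schwartz_eq]
  exact (SchwartzMap.fderivCLM ℝ E3 ℝ g).continuous

lemma uu_eq' (i : Fin 3) :
    uu f i = fun w : E3 => f w * Pf f i w + (1/2 : ℝ) * (w i * (f w * f w)) := by
  funext w
  unfold uu
  rw [Pf_eq]
  ring

lemma diff_uu (i : Fin 3) : Differentiable ℝ (uu f i) := by
  rw [uu_eq']
  exact (f.differentiable.mul (Pf f i).differentiable).add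
    ((((EuclideanSpace.proj (𝕜 := ℝ) i).differentiable).mul
      (f.differentiable.mul f.differentiable)).const_mul _)

lemma hasFDerivAt_uu (i : Fin 3) (v : E3) : HasFDerivAt (uu f i)
    (f v • fderiv ℝ ⇑(Pf f i) v + Pf f i v • fderiv ℝ ⇑f v
      + ((v i * f v) • fderiv ℝ ⇑f v
        + (f v * f v / 2) • (EuclideanSpace.proj (𝕜 := ℝ) i))) v := by
  have hf : HasFDerivAt ⇑f (fderiv ℝ ⇑f v) v := (f.differentiable v).hasFDerivAt
  have hP : HasFDerivAt ⇑(Pf f i) (fderiv ℝ ⇑(Pf f i) v) v :=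
    ((Pf f i).differentiable v).hasFDerivAt
  have hproj : HasFDerivAt (fun w : E3 => w i) (EuclideanSpace.proj (𝕜 := ℝ) i) v :=
    (EuclideanSpace.proj (𝕜 := ℝ) i).hasFDerivAt
  have h1 := hf.mul hP
  have h2 := (hproj.mul (hf.mul hf)).const_mul (1/2 : ℝ)
  have hsum := h1.add h2
  rw [uu_eq']
  refine hsum.congr_fderiv ?_
  ext u
  simp only [ContinuousLinearMap.add_apply, ContinuousLinearMap.coe_smul', Pi.smul_apply,
    smul_eq_mul]
  simp only [Pi.mul_apply]
  ring

lemma fderiv_uu_int (i : Fin 3) : Integrable (fderiv ℝ (uu f i)) volume := by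
  have he : fderiv ℝ (uu f i) = fun v =>
      f v • fderiv ℝ ⇑(Pf f i) v + Pf f i v • fderiv ℝ ⇑f v
      + ((v i * f v) • fderiv ℝ ⇑f v
        + (f v * f v / 2) • (EuclideanSpace.proj (𝕜 := ℝ) i)) :=
    funext fun v => (hasFDerivAt_uu f i v).fderiv
  rw [he]
  have T1 : Integrable (fun v : E3 => f v • fderiv ℝ ⇑(Pf f i) v) volume :=
    smul_int f.continuous (bdd_f f) (int_fderiv_schwartz (Pf f i))
      (cont_fderiv_schwartz (Pf f i))
  have T2 : Integrable (fun v : E3 => Pf f i v • fderiv ℝ ⇑f v) volume :=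
    smul_int (Pf f i).continuous (bdd_f (Pf f i)) (int_fderiv_schwartz f)
      (cont_fderiv_schwartz f)
  have T3 : Integrable (fun v : E3 => (v i * f v) • fderiv ℝ ⇑f v) volume :=
    smul_int ((cont_coord i).mul f.continuous) (bdd_coord_f f i) (int_fderiv_schwartz f)
      (cont_fderiv_schwartz f)
  have T4 : Integrable (fun v : E3 => (f v * f v / 2) • (EuclideanSpace.proj (𝕜 := ℝ) i)) volume := by
    refine Integrable.smul_const ?_ _
    exact (f.integrable.bdd_mul f.continuous.aestronglyMeasurable (Filter.Eventually.of_forall (bdd_f f).choose_spec)).div_const 2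
  exact (T1.fun_add T2).fun_add (Integrable.fun_add (ε' := E3 →L[ℝ] ℝ) T3 T4)

lemma int_pd_uu (i : Fin 3) : Integrable (pd i (uu f i)) volume := by
  have := (ContinuousLinearMap.apply ℝ ℝ
      (EuclideanSpace.single i 1 : E3)).integrable_comp (fderiv_uu_int f i)
  exact this

lemma integral_pd_uu (i : Fin 3) : ∫ v, pd i (uu f i) v = 0 :=
  integral_fderiv_zero (int_uu f i) (diff_uu f i) (fderiv_uu_int f i) i

end FPaux

namespace FPaux

variable (f : SchwartzMap E3 ℝ)

lemma pdg_zero (h : ∀ v, Lop ⇑f v = 0) (i : Fin 3) (v : E3) : pd i (gg ⇑f) v = 0 := by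
  set S : E3 → ℝ := fun v => ∑ j, (sqrtM v * pd j (gg ⇑f) v) ^ 2 with hS
  have hS_eq : S = fun v => ∑ j, pd j (uu f j) v := funext fun v => (sum_pd_uu f h v).symm
  have hint : Integrable S volume := by
    rw [hS_eq]
    exact integrable_finset_sum _ fun j _ => int_pd_uu f j
  have hzero : ∫ v, S v = 0 := by
    rw [hS_eq]
    rw [integral_finset_sum _ fun j _ => int_pd_uu f j]
    simp [integral_pd_uu f]
  have hnonneg : 0 ≤ S := fun v => Finset.sum_nonneg fun j _ => sq_nonneg _
  have hae := (integral_eq_zero_iff_of_nonneg hnonneg hint).mp hzero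
  have hScont : Continuous S := by
    refine continuous_finset_sum _ fun j _ => ?_
    exact ((contDiff_sqrtM.continuous).mul (contDiff_pdg f j).continuous).pow 2
  have hS0 : S = 0 := (Continuous.ae_eq_iff_eq volume hScont continuous_const).mp hae
  have hv := congrFun hS0 v
  simp only [Pi.zero_apply, hS] at hv
  have hterm := (Finset.sum_eq_zero_iff_of_nonneg fun j _ => sq_nonneg _).mp hv i
    (Finset.mem_univ i)
  have := pow_eq_zero_iff (two_ne_zero) |>.mp hterm
  rcases mul_eq_zero.mp this with h' | h'
  · exact absurd h' (sqrtM_pos v).ne'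
  · exact h'

lemma fderiv_g_zero (h : ∀ v, Lop ⇑f v = 0) (v : E3) : fderiv ℝ (gg ⇑f) v = 0 := by
  have hext : ((fderiv ℝ (gg ⇑f) v : E3 →L[ℝ] ℝ) : E3 →ₗ[ℝ] ℝ)
      = (((0 : E3 →L[ℝ] ℝ)) : E3 →ₗ[ℝ] ℝ) := by
    refine Module.Basis.ext (EuclideanSpace.basisFun (Fin 3) ℝ).toBasis fun i => ?_
    have hbi : (EuclideanSpace.basisFun (Fin 3) ℝ).toBasis i = EuclideanSpace.single i 1 := by
      simp [OrthonormalBasis.coe_toBasis, EuclideanSpace.basisFun_apply]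
    rw [hbi]
    have hz := pdg_zero f h i v
    unfold pd at hz
    simpa using hz
  exact ContinuousLinearMap.coe_injective hext

lemma int_Mw : ∫ v : E3, Mw v = 1 := by
  unfold Mw
  rw [MeasureTheory.integral_const_mul]
  have he : (fun v : E3 => Real.exp (-‖v‖ ^ 2 / 2)) = fun v : E3 => Real.exp (-(1/2) * ‖v‖ ^ 2) := by
    funext v; ring_nf
  rw [he, GaussianFourier.integral_rexp_neg_mul_sq_norm (by norm_num : (0:ℝ) < 1/2)]
  have hr : (Module.finrank ℝ E3 : ℝ) = 3 := by
    simp [finrank_euclideanSpace_fin]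
  rw [hr]
  have : (π / (1/2) : ℝ) = 2 * π := by ring
  rw [this, ← Real.rpow_add two_pi_pos]
  norm_num

end FPaux


/-- If a Schwartz function satisfies `ℒf = 0` identically then `f = a^f √M`:
the null space of `ℒ` is spanned by `√M`. -/
theorem stmt6 (f : SchwartzMap E3 ℝ) (h : ∀ v, Lop ⇑f v = 0) :
    ∀ v, f v = aF ⇑f * sqrtM v := by
  intro v
  have hconst := is_const_of_fderiv_eq_zero (FPaux.diff_g f) (FPaux.fderiv_g_zero f h)
  have hfw : ∀ w, f w = FPaux.gg ⇑f 0 * sqrtM w := by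
    intro w
    have hgw : f w / sqrtM w = FPaux.gg ⇑f 0 := hconst w 0
    exact (div_eq_iff (FPaux.sqrtM_pos w).ne').mp hgw
  have ha : aF ⇑f = FPaux.gg ⇑f 0 := by
    unfold aF
    have he : (fun w => sqrtM w * f w) = fun w => FPaux.gg ⇑f 0 * Mw w := by
      funext w
      rw [hfw w, ← FPaux.sqrtM_sq w]
      ring
    rw [he, MeasureTheory.integral_const_mul, FPaux.int_Mw, mul_one]
  rw [hfw v, ha]
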